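/- Let f be an (n,N,N−2) F-sequence (so M = N−2). Then extending f by setting f_{N,N−1} = f_{N−1,N−1} − 1 yields an (n,N,N−1) F-sequence. -/
import Mathlib


/-- The lower bound `L_f(i,j)` used in the F-sequence constraints. -/
def Lb (f : ℤ → ℤ → ℤ) (i j : ℤ) : ℤ :=
  max (f i (j - 1)) (max (f (i - 1) j - 1)
    (f i (j - 1) + f (i - 1) j - f (i - 1) (j - 1) - 1))

/-- The upper bound `U_f(i,j)` used in the F-sequence constraints. -/
def Ub (f : ℤ → ℤ → ℤ) (i j : ℤ) : ℤ :=
  min (f (i - 1) j) (f i (j - 1) + f (i - 1) j - f (i - 1) (j - 1))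

/-- The index domain of an `(n,N,M)` F-sequence:
`{(i,j) : 0 ≤ j ≤ i ≤ N-1} ∪ {(N,j) : 0 ≤ j ≤ M}`. -/
def ValidIdx (N M i j : ℤ) : Prop :=
  (0 ≤ j ∧ j ≤ i ∧ i ≤ N - 1) ∨ (i = N ∧ 0 ≤ j ∧ j ≤ M)

/-- An `(n,N,M)` **F**-sequence: a partially filled F-matrix, filled on the domain
`{(i,j) : 0 ≤ j ≤ i ≤ N-1} ∪ {(N,j) : 0 ≤ j ≤ M}` (and zero elsewhere). -/
structure IsFSeq (n N M : ℕ) (f : ℤ → ℤ → ℤ) : Prop where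
  hMN : M ≤ N
  hN2n : (N : ℤ) ≤ 2 * (n : ℤ) - 3
  zero_outside : ∀ i j : ℤ, ¬ ValidIdx (N : ℤ) (M : ℤ) i j → f i j = 0
  nonneg : ∀ i j : ℤ, 0 ≤ f i j
  diag_pos : ∀ i : ℤ, 0 ≤ i → i ≤ max ((N : ℤ) - 1) (M : ℤ) → 0 < f i i
  diag_first : f 0 0 = 2
  diag_step : ∀ i : ℤ, 1 ≤ i → i ≤ max ((N : ℤ) - 1) (M : ℤ) →
      f i i = f (i - 1) (i - 1) + 1 ∨ f i i = f (i - 1) (i - 1) - 1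
  diag_bound : ∀ i : ℤ, 0 ≤ i → i ≤ max ((N : ℤ) - 1) (M : ℤ) →
      f i i ≤ 2 * (n : ℤ) - i - 2
  bounds : ∀ i j : ℤ, ValidIdx (N : ℤ) (M : ℤ) i j → 0 ≤ j → j ≤ i - 2 →
      Lb f i j ≤ f i j ∧ f i j ≤ Ub f i j
  special : ∀ i j : ℤ, ValidIdx (N : ℤ) (M : ℤ) i j → 0 ≤ j → j ≤ i - 1 →
      f (i - 1) j = f (i - 1) (i - 1) → f i j = f (i - 1) (i - 1) - 1

/-- extending an `(n,N,N-2)` F-sequence at the subdiagonal entry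
`(N,N-1)` by `f_{N-1,N-1} - 1` yields an `(n,N,N-1)` F-sequence. -/
theorem fseq_extend_subdiagonal (n N M : ℕ) (hM : M + 2 = N) (f : ℤ → ℤ → ℤ)
    (hf : IsFSeq n N M f) :
    IsFSeq n N (M + 1)
      (fun i j => if i = (N : ℤ) ∧ j = (N : ℤ) - 1 then
        f ((N : ℤ) - 1) ((N : ℤ) - 1) - 1 else f i j) := by
  obtain ⟨hMN, hN2n, hzero, hnn, hdp, hd1, hds, hdb, hb, hsp⟩ := hf
  have hN : (M : ℤ) + 2 = (N : ℤ) := by exact_mod_cast hM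
  set g : ℤ → ℤ → ℤ := fun i j => if i = (N : ℤ) ∧ j = (N : ℤ) - 1 then
        f ((N : ℤ) - 1) ((N : ℤ) - 1) - 1 else f i j with hg
  have hgval : ∀ i j : ℤ, ¬ (i = (N : ℤ) ∧ j = (N : ℤ) - 1) → g i j = f i j := by
    intro i j h; simp only [hg, if_neg h]
  have hmax : max ((N : ℤ) - 1) ((M : ℤ) + 1) = max ((N : ℤ) - 1) (M : ℤ) := by omega
  have hgdiag : ∀ i : ℤ, g i i = f i i := by
    intro i; apply hgval; omega
  constructor
  · omega
  · exact hN2n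
  · intro i j h
    push_cast at h
    have h1 : ¬ ValidIdx (N : ℤ) (M : ℤ) i j := by
      unfold ValidIdx at h ⊢; omega
    have h2 : ¬ (i = (N : ℤ) ∧ j = (N : ℤ) - 1) := by
      unfold ValidIdx at h; omega
    rw [hgval i j h2]; exact hzero i j h1
  · intro i j
    by_cases h : i = (N : ℤ) ∧ j = (N : ℤ) - 1
    · simp only [hg, if_pos h]
      have := hdp ((N : ℤ) - 1) (by omega) (by omega)
      omega
    · rw [hgval i j h]; exact hnn i j
  · intro i hi hi'; rw [hgdiag]; exact hdp i hi (by omega)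
  · rw [hgdiag]; exact hd1
  · intro i hi hi'
    rw [hgdiag, hgdiag]; exact hds i hi (by omega)
  · intro i hi hi'; rw [hgdiag]; exact hdb i hi (by omega)
  · intro i j hv hj hj2
    push_cast at hv
    have hiN : i ≤ (N : ℤ) := by unfold ValidIdx at hv; omega
    have hv' : ValidIdx (N : ℤ) (M : ℤ) i j := by
      unfold ValidIdx at hv ⊢; omega
    have e1 : g i j = f i j := hgval i j (by omega)
    have e2 : g i (j - 1) = f i (j - 1) := hgval _ _ (by omega)
    have e3 : g (i - 1) j = f (i - 1) j := hgval _ _ (by omega)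
    have e4 : g (i - 1) (j - 1) = f (i - 1) (j - 1) := hgval _ _ (by omega)
    have eL : Lb g i j = Lb f i j := by unfold Lb; rw [e2, e3, e4]
    have eU : Ub g i j = Ub f i j := by unfold Ub; rw [e2, e3, e4]
    rw [eL, eU, e1]; exact hb i j hv' hj hj2
  · intro i j hv hj hj1 heq
    push_cast at hv
    have hiN : i ≤ (N : ℤ) := by unfold ValidIdx at hv; omega
    by_cases h : i = (N : ℤ) ∧ j = (N : ℤ) - 1
    · have e : g i j = f ((N : ℤ) - 1) ((N : ℤ) - 1) - 1 := by
        simp only [hg, if_pos h]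
      rw [e, hgdiag, h.1]
    · have hv' : ValidIdx (N : ℤ) (M : ℤ) i j := by
        unfold ValidIdx at hv ⊢; omega
      rw [hgval i j h, hgdiag]
      rw [hgval (i-1) j (by omega), hgdiag] at heq
      exact hsp i j hv' hj hj1 heq
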